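/- Fix 0 < β < 1 and define h_β ∈ L²(ℝ) by h_β(x) = (1/2 − |x|)^{β/2} for |x| ≤ 1/2 and h_β(x) = 0 for |x| > 1/2. Then h_β ∈ W^{s,2}(ℝ) for every s < (1+β)/2; equivalently, ∫_ℝ |ξ|^{2s} |ĥ_β(ξ)|² dξ < ∞ for all s < (1+β)/2. -/

import Mathlib

open MeasureTheory Complex Filter
open scoped ENNReal Topology

noncomputable section

/-- The function `h_β(x) = (1/2 - |x|)^{β/2}` for `|x| ≤ 1/2`, and `0` otherwise. -/
def hbeta (β : ℝ) : ℝ → ℂ :=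
  fun x => if |x| ≤ 1/2 then (((1/2 - |x| : ℝ) ^ (β/2) : ℝ) : ℂ) else 0

lemma myRpowSubadd {x y p : ℝ} (hx : 0 ≤ x) (hy : 0 ≤ y) (hp : 0 ≤ p) (hp1 : p ≤ 1) :
    (x + y) ^ p ≤ x ^ p + y ^ p := by
  have h := NNReal.rpow_add_le_add_rpow x.toNNReal y.toNNReal hp hp1
  have h2 := NNReal.coe_le_coe.mpr h
  push_cast at h2
  rwa [Real.coe_toNNReal x hx, Real.coe_toNNReal y hy] at h2

def Hb (c : ℝ) : ℝ → ℝ := fun x => (max (1/2 - |x|) 0) ^ c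

lemma hbeta_eq (β : ℝ) (hβ : 0 < β) : hbeta β = fun x => ((Hb (β/2) x : ℝ) : ℂ) := by
  funext x
  simp only [hbeta, Hb]
  split_ifs with h
  · rw [max_eq_left (by linarith)]
  · rw [max_eq_right (by push_neg at h; linarith), Real.zero_rpow (by positivity)]
    simp

lemma Hb_nonneg (c : ℝ) (x : ℝ) : 0 ≤ Hb c x := Real.rpow_nonneg (le_max_right _ _) c

lemma Hb_le_one {c : ℝ} (hc : 0 ≤ c) (x : ℝ) : Hb c x ≤ 1 :=
  Real.rpow_le_one (le_max_right _ _)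
    (max_le (by linarith [abs_nonneg x]) zero_le_one) hc

lemma Hb_continuous {c : ℝ} (hc : 0 ≤ c) : Continuous (Hb c) :=
  (Real.continuous_rpow_const hc).comp
    ((continuous_const.sub _root_.continuous_abs).max continuous_const)

lemma Hb_zero {c : ℝ} (hc : 0 < c) {x : ℝ} (hx : 1/2 ≤ |x|) : Hb c x = 0 := by
  rw [Hb, max_eq_right (by linarith), Real.zero_rpow hc.ne']

lemma Hb_holder {c : ℝ} (hc0 : 0 < c) (hc1 : c ≤ 1) (x y : ℝ) :
    |Hb c x - Hb c y| ≤ |x - y| ^ c := by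
  wlog h : Hb c y ≤ Hb c x generalizing x y
  · rw [abs_sub_comm, abs_sub_comm x y]; exact this y x (le_of_not_ge h)
  rw [_root_.abs_of_nonneg (by linarith)]
  set M : ℝ → ℝ := fun z => max (1/2 - |z|) 0 with hM
  have hMx : 0 ≤ M x := le_max_right _ _
  have hMy : 0 ≤ M y := le_max_right _ _
  have hlip : M x - M y ≤ |x - y| := by
    have h1 := abs_sub_abs_le_abs_sub y x
    rw [abs_sub_comm] at h1
    rcases le_total (1/2 - |x|) 0 with hx1 | hx1
    · have : M x = 0 := max_eq_right hx1
      rw [this]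
      linarith [abs_nonneg (x - y)]
    · have hx2 : M x = 1/2 - |x| := max_eq_left hx1
      have hy2 : 1/2 - |y| ≤ M y := le_max_left _ _
      rw [hx2]
      linarith
  rcases le_total (M y) (M x) with hm | hm
  · have key : M x ^ c ≤ M y ^ c + (M x - M y) ^ c := by
      have := myRpowSubadd hMy (by linarith : (0:ℝ) ≤ M x - M y) hc0.le hc1
      simpa using this
    have h2 : (M x - M y) ^ c ≤ |x - y| ^ c :=
      Real.rpow_le_rpow (by linarith) hlip hc0.le
    simp only [Hb]
    linarith
  · have hxy : Hb c x ≤ Hb c y := Real.rpow_le_rpow hMx hm hc0.le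
    calc Hb c x - Hb c y ≤ 0 := by linarith
      _ ≤ |x - y| ^ c := Real.rpow_nonneg (abs_nonneg _) c


/-- Core estimate: second difference of `t ↦ t^c` has small L¹ norm on `[0,T]`. -/
lemma core_est {c δ T : ℝ} (hc0 : 0 < c) (hc1 : c < 1) (hδ : 0 < δ) (hT : 0 ≤ T) :
    ∫ t in (0:ℝ)..T, |(t + 2*δ) ^ c - 2 * (t + δ) ^ c + t ^ c| ≤ δ ^ (1 + c) := by
  have hrc : Continuous (fun t : ℝ => t ^ c) := Real.continuous_rpow_const hc0.le
  -- pointwise: integrand equals 2(t+δ)^c - (t+2δ)^c - t^c ≥ 0 on [0,T]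
  have hconc := (Real.strictConcaveOn_rpow hc0 hc1).concaveOn
  have hsign : ∀ t : ℝ, 0 ≤ t →
      |(t + 2*δ) ^ c - 2 * (t + δ) ^ c + t ^ c|
        = 2 * (t + δ) ^ c - (t + 2*δ) ^ c - t ^ c := by
    intro t ht
    have hmem1 : t ∈ Set.Ici (0:ℝ) := ht
    have hmem2 : (t + 2*δ) ∈ Set.Ici (0:ℝ) := by simp; linarith
    have := hconc.2 hmem1 hmem2 (by norm_num : (0:ℝ) ≤ 1/2) (by norm_num : (0:ℝ) ≤ 1/2)
      (by norm_num)
    have heq : (1/2 : ℝ) • t + (1/2 : ℝ) • (t + 2*δ) = t + δ := by ring_nf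
    rw [heq] at this
    rw [abs_of_nonpos (by rw [smul_eq_mul, smul_eq_mul] at this; linarith)]
    ring
  -- the function ψ
  set ψ : ℝ → ℝ := fun t => (t + δ) ^ c - t ^ c with hψ
  have hψc : Continuous ψ := (hrc.comp (continuous_id.add continuous_const)).sub hrc
  have hint : ∀ a b : ℝ, IntervalIntegrable ψ volume a b := fun a b => hψc.intervalIntegrable a b
  -- rewrite the integral
  have hcongr : ∫ t in (0:ℝ)..T, |(t + 2*δ) ^ c - 2 * (t + δ) ^ c + t ^ c|
      = (∫ t in (0:ℝ)..T, ψ t) - ∫ t in (0:ℝ)..T, ψ (t + δ) := by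
    have hint2 : IntervalIntegrable (fun t => ψ (t + δ)) volume 0 T :=
      (hψc.comp (continuous_add_right δ)).intervalIntegrable 0 T
    rw [← intervalIntegral.integral_sub (hint 0 T) hint2]
    apply intervalIntegral.integral_congr
    intro t ht
    rw [Set.uIcc_of_le hT] at ht
    have := hsign t ht.1
    simp only [hψ]
    rw [this]; ring
  rw [hcongr, intervalIntegral.integral_comp_add_right ψ δ, zero_add]
  -- Chasles: ∫_0^T - ∫_δ^{T+δ} = ∫_0^δ - ∫_T^{T+δ}
  have chasles : (∫ t in (0:ℝ)..T, ψ t) - ∫ t in δ..(T+δ), ψ t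
      = (∫ t in (0:ℝ)..δ, ψ t) - ∫ t in T..(T+δ), ψ t := by
    have h1 : (∫ t in (0:ℝ)..δ, ψ t) + ∫ t in δ..T, ψ t = ∫ t in (0:ℝ)..T, ψ t :=
      intervalIntegral.integral_add_adjacent_intervals (hint 0 δ) (hint δ T)
    have h2 : (∫ t in δ..T, ψ t) + ∫ t in T..(T+δ), ψ t = ∫ t in δ..(T+δ), ψ t :=
      intervalIntegral.integral_add_adjacent_intervals (hint δ T) (hint T (T+δ))
    linarith
  rw [chasles]
  -- bounds: 0 ≤ ψ ≤ δ^c on [0,∞)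
  have hψ_nonneg : ∀ t : ℝ, 0 ≤ t → 0 ≤ ψ t := by
    intro t ht
    have : t ^ c ≤ (t + δ) ^ c := Real.rpow_le_rpow ht (by linarith) hc0.le
    simp only [hψ]; linarith
  have hψ_le : ∀ t : ℝ, 0 ≤ t → ψ t ≤ δ ^ c := by
    intro t ht
    have := myRpowSubadd ht hδ.le hc0.le hc1.le
    simp only [hψ]; linarith
  have hδc : δ ^ (1 + c) = δ * δ ^ c := by
    rw [Real.rpow_add hδ, Real.rpow_one]
  have hub : (∫ t in (0:ℝ)..δ, ψ t) ≤ δ * δ ^ c := by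
    calc (∫ t in (0:ℝ)..δ, ψ t) ≤ ∫ _t in (0:ℝ)..δ, δ ^ c := by
          apply intervalIntegral.integral_mono_on hδ.le (hint 0 δ)
            (intervalIntegrable_const)
          intro t ht; exact hψ_le t ht.1
      _ = δ * δ ^ c := by simp
  have hlb : 0 ≤ ∫ t in T..(T+δ), ψ t := by
    apply intervalIntegral.integral_nonneg (by linarith)
    intro t ht; exact hψ_nonneg t (le_trans hT ht.1)
  linarith

lemma holder_G {c δ : ℝ} (hc0 : 0 < c) (hc1 : c < 1) (hδ0 : 0 < δ) (x : ℝ) :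
    |Hb c (x + 2*δ) - 2 * Hb c (x + δ) + Hb c x| ≤ 2 * δ ^ c := by
  have h1 := Hb_holder hc0 hc1.le (x + 2*δ) (x + δ)
  have h2 := Hb_holder hc0 hc1.le x (x + δ)
  have e1 : |x + 2*δ - (x + δ)| = δ := by rw [show x + 2*δ - (x + δ) = δ by ring, abs_of_pos hδ0]
  have e2 : |x - (x + δ)| = δ := by rw [show x - (x + δ) = -δ by ring, abs_neg, abs_of_pos hδ0]
  rw [e1] at h1; rw [e2] at h2
  calc |Hb c (x + 2*δ) - 2 * Hb c (x + δ) + Hb c x|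
      = |(Hb c (x + 2*δ) - Hb c (x + δ)) + (Hb c x - Hb c (x + δ))| := by ring_nf
    _ ≤ |Hb c (x + 2*δ) - Hb c (x + δ)| + |Hb c x - Hb c (x + δ)| := abs_add_le _ _
    _ ≤ δ ^ c + δ ^ c := add_le_add h1 h2
    _ = 2 * δ ^ c := by ring

lemma l1bound {c δ : ℝ} (hc0 : 0 < c) (hc1 : c < 1) (hδ0 : 0 < δ) (hδ : δ ≤ 1/4) :
    ∫ x : ℝ, |Hb c (x + 2*δ) - 2 * Hb c (x + δ) + Hb c x| ≤ 14 * δ ^ (1 + c) := by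
  have hHbc : Continuous (Hb c) := Hb_continuous hc0.le
  set G : ℝ → ℝ := fun x => Hb c (x + 2*δ) - 2 * Hb c (x + δ) + Hb c x with hG
  set F : ℝ → ℝ := fun t => |(t + 2*δ) ^ c - 2 * (t + δ) ^ c + t ^ c| with hF
  have hGc : Continuous G := by
    apply Continuous.add
    apply Continuous.sub
    · exact hHbc.comp (continuous_add_right _)
    · exact continuous_const.mul (hHbc.comp (continuous_add_right _))
    · exact hHbc
  have hAGc : Continuous (fun x => |G x|) := hGc.abs
  have hint : ∀ a b : ℝ, IntervalIntegrable (fun x => |G x|) volume a b :=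
    fun a b => hAGc.intervalIntegrable a b
  have hsupp : Function.support (fun x => |G x|) ⊆ Set.Ioc (-(1/2) - 2*δ) (1/2) := by
    intro x hx
    by_contra hmem
    apply hx
    simp only [Set.mem_Ioc, not_and_or, not_lt, not_le] at hmem
    have hz : G x = 0 := by
      rcases hmem with hle | hgt
      · have z1 : Hb c x = 0 := Hb_zero hc0 (by rw [_root_.abs_of_nonpos (by linarith)]; linarith)
        have z2 : Hb c (x + δ) = 0 := Hb_zero hc0 (by rw [_root_.abs_of_nonpos (by linarith)]; linarith)
        have z3 : Hb c (x + 2*δ) = 0 := Hb_zero hc0 (by rw [_root_.abs_of_nonpos (by linarith)]; linarith)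
        simp [hG, z1, z2, z3]
      · have z1 : Hb c x = 0 := Hb_zero hc0 (by rw [_root_.abs_of_nonneg (by linarith)]; linarith)
        have z2 : Hb c (x + δ) = 0 := Hb_zero hc0 (by rw [_root_.abs_of_nonneg (by linarith)]; linarith)
        have z3 : Hb c (x + 2*δ) = 0 := Hb_zero hc0 (by rw [_root_.abs_of_nonneg (by linarith)]; linarith)
        simp [hG, z1, z2, z3]
    simp [hz]
  have hmain : ∫ x : ℝ, |G x| = ∫ x in (-(1/2) - 2*δ)..(1/2), |G x| :=
    (intervalIntegral.integral_eq_integral_of_support_subset hsupp).symm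
  rw [hmain]
  have split : ∫ x in (-(1/2) - 2*δ)..(1/2), |G x|
      = (∫ x in (-(1/2) - 2*δ)..(-(1/2)), |G x|) + (∫ x in (-(1/2))..(-(2*δ)), |G x|)
        + (∫ x in (-(2*δ))..(0:ℝ), |G x|) + (∫ x in (0:ℝ)..(1/2 - 2*δ), |G x|)
        + (∫ x in (1/2 - 2*δ)..(1/2:ℝ), |G x|) := by
    rw [intervalIntegral.integral_add_adjacent_intervals (hint _ _) (hint _ _),
      intervalIntegral.integral_add_adjacent_intervals (hint _ _) (hint _ _),
      intervalIntegral.integral_add_adjacent_intervals (hint _ _) (hint _ _),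
      intervalIntegral.integral_add_adjacent_intervals (hint _ _) (hint _ _)]
  rw [split]
  have bad : ∀ u v : ℝ, u ≤ v → ∫ x in u..v, |G x| ≤ (v - u) * (2 * δ ^ c) := by
    intro u v huv
    calc (∫ x in u..v, |G x|) ≤ ∫ _x in u..v, 2 * δ ^ c := by
          apply intervalIntegral.integral_mono_on huv (hint u v) intervalIntegrable_const
          intro x _; exact holder_G hc0 hc1 hδ0 x
      _ = (v - u) * (2 * δ ^ c) := by simp [smul_eq_mul]; ring
  have hδc : δ ^ (1 + c) = δ * δ ^ c := by rw [Real.rpow_add hδ0, Real.rpow_one]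
  have bad1 : ∫ x in (-(1/2) - 2*δ)..(-(1/2)), |G x| ≤ 4 * δ ^ (1+c) := by
    have := bad _ _ (by linarith : -(1/2) - 2*δ ≤ -(1/2))
    calc (∫ x in (-(1/2) - 2*δ)..(-(1/2)), |G x|) ≤ (-(1/2) - (-(1/2) - 2*δ)) * (2 * δ ^ c) := this
      _ = 4 * δ ^ (1+c) := by rw [hδc]; ring
  have bad3 : ∫ x in (-(2*δ))..(0:ℝ), |G x| ≤ 4 * δ ^ (1+c) := by
    have := bad _ _ (by linarith : -(2*δ) ≤ (0:ℝ))
    calc (∫ x in (-(2*δ))..(0:ℝ), |G x|) ≤ (0 - (-(2*δ))) * (2 * δ ^ c) := this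
      _ = 4 * δ ^ (1+c) := by rw [hδc]; ring
  have bad5 : ∫ x in (1/2 - 2*δ)..(1/2:ℝ), |G x| ≤ 4 * δ ^ (1+c) := by
    have := bad _ _ (by linarith : 1/2 - 2*δ ≤ (1/2:ℝ))
    calc (∫ x in (1/2 - 2*δ)..(1/2:ℝ), |G x|) ≤ (1/2 - (1/2 - 2*δ)) * (2 * δ ^ c) := this
      _ = 4 * δ ^ (1+c) := by rw [hδc]; ring
  have hFcore : ∀ T : ℝ, 0 ≤ T → ∫ t in (0:ℝ)..T, F t ≤ δ ^ (1 + c) := by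
    intro T hT
    have := core_est hc0 hc1 hδ0 hT
    simpa [hF] using this
  have good2 : ∫ x in (-(1/2))..(-(2*δ)), |G x| ≤ δ ^ (1+c) := by
    have hcongr : ∫ x in (-(1/2))..(-(2*δ)), |G x|
        = ∫ x in (-(1/2))..(-(2*δ)), F (x + 1/2) := by
      apply intervalIntegral.integral_congr
      intro x hx
      rw [Set.uIcc_of_le (by linarith)] at hx
      obtain ⟨hx1, hx2⟩ := hx
      have e0 : Hb c x = (x + 1/2) ^ c := by
        simp only [Hb]
        rw [_root_.abs_of_nonpos (by linarith), max_eq_left (by linarith),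
          show (1/2 - -x : ℝ) = x + 1/2 by ring]
      have e1 : Hb c (x + δ) = (x + 1/2 + δ) ^ c := by
        simp only [Hb]
        rw [_root_.abs_of_nonpos (by linarith), max_eq_left (by linarith),
          show (1/2 - -(x + δ) : ℝ) = x + 1/2 + δ by ring]
      have e2 : Hb c (x + 2*δ) = (x + 1/2 + 2*δ) ^ c := by
        simp only [Hb]
        rw [_root_.abs_of_nonpos (by linarith), max_eq_left (by linarith),
          show (1/2 - -(x + 2*δ) : ℝ) = x + 1/2 + 2*δ by ring]
      simp only [hG, hF, e0, e1, e2]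
    have key := intervalIntegral.integral_comp_add_right (a := -(1/2)) (b := -(2*δ)) F (1/2)
    rw [show (-(1/2) + 1/2 : ℝ) = 0 by norm_num, show (-(2*δ) + 1/2 : ℝ) = 1/2 - 2*δ by ring] at key
    rw [hcongr, key]
    exact hFcore _ (by linarith)
  have good4 : ∫ x in (0:ℝ)..(1/2 - 2*δ), |G x| ≤ δ ^ (1+c) := by
    have hcongr : ∫ x in (0:ℝ)..(1/2 - 2*δ), |G x|
        = ∫ x in (0:ℝ)..(1/2 - 2*δ), F ((1/2 - 2*δ) - x) := by
      apply intervalIntegral.integral_congr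
      intro x hx
      rw [Set.uIcc_of_le (by linarith)] at hx
      obtain ⟨hx1, hx2⟩ := hx
      have e0 : Hb c x = (1/2 - 2*δ - x + 2*δ) ^ c := by
        simp only [Hb]
        rw [_root_.abs_of_nonneg (by linarith), max_eq_left (by linarith),
          show (1/2 - x : ℝ) = 1/2 - 2*δ - x + 2*δ by ring]
      have e1 : Hb c (x + δ) = (1/2 - 2*δ - x + δ) ^ c := by
        simp only [Hb]
        rw [_root_.abs_of_nonneg (by linarith), max_eq_left (by linarith),
          show (1/2 - (x + δ) : ℝ) = 1/2 - 2*δ - x + δ by ring]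
      have e2 : Hb c (x + 2*δ) = (1/2 - 2*δ - x) ^ c := by
        simp only [Hb]
        rw [_root_.abs_of_nonneg (by linarith), max_eq_left (by linarith),
          show (1/2 - (x + 2*δ) : ℝ) = 1/2 - 2*δ - x by ring]
      simp only [hG, hF, e0, e1, e2]
      congr 1
      ring
    have key := intervalIntegral.integral_comp_sub_left (a := (0:ℝ)) (b := 1/2 - 2*δ) F (1/2 - 2*δ)
    rw [show (1/2 - 2*δ - (1/2 - 2*δ) : ℝ) = 0 by ring, sub_zero] at key
    rw [hcongr, key]
    exact hFcore _ (by linarith)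
  linarith

open FourierTransform Real
open scoped RealInnerProductSpace

lemma l1bound' {c δ : ℝ} (hc0 : 0 < c) (hc1 : c < 1) (hδ0 : δ ≠ 0) (hδ : |δ| ≤ 1/4) :
    ∫ x : ℝ, |Hb c (x + 2*δ) - 2 * Hb c (x + δ) + Hb c x| ≤ 14 * |δ| ^ (1 + c) := by
  rcases hδ0.lt_or_gt with hneg | hpos
  · have hδ' : 0 < -δ := by linarith
    have key := l1bound hc0 hc1 hδ' (by rwa [abs_of_neg hneg] at hδ)
    rw [abs_of_neg hneg]
    have e : ∀ x : ℝ, |Hb c ((x + 2*(-δ)) + 2*δ) - 2 * Hb c ((x + 2*(-δ)) + δ) + Hb c (x + 2*(-δ))|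
        = |Hb c (x + 2*(-δ)) - 2 * Hb c (x + (-δ)) + Hb c x| := by
      intro x
      rw [show (x + 2*(-δ)) + 2*δ = x by ring, show (x + 2*(-δ)) + δ = x + (-δ) by ring]
      congr 1; ring
    have sub : ∫ x : ℝ, |Hb c (x + 2*δ) - 2 * Hb c (x + δ) + Hb c x|
        = ∫ x : ℝ, |Hb c (x + 2*(-δ)) - 2 * Hb c (x + (-δ)) + Hb c x| := by
      have h0 := integral_add_right_eq_self (μ := volume)
        (fun x : ℝ => |Hb c (x + 2*δ) - 2 * Hb c (x + δ) + Hb c x|) (2*(-δ))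
      rw [← h0]
      simp only [e]
    rw [sub]
    exact key
  · rw [abs_of_pos hpos]
    exact l1bound hc0 hc1 hpos (by rwa [abs_of_pos hpos] at hδ)

lemma char_half : (Real.fourierChar ((1:ℝ)/2) : ℂ) = -1 := by
  rw [Real.fourierChar_apply]
  rw [show (2 * π * (1/2 : ℝ)) = π by ring]
  exact Complex.exp_pi_mul_I

lemma char_one : (Real.fourierChar (1:ℝ) : ℂ) = 1 := by
  rw [Real.fourierChar_apply]
  rw [show ((2 * π * (1:ℝ) : ℝ) : ℂ) * Complex.I = 2 * (π:ℂ) * Complex.I by push_cast; ring]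
  exact Complex.exp_two_pi_mul_I

lemma four_eq {h : ℝ → ℂ} (hInt : Integrable h) {ξ δ : ℝ} (hδξ : δ * ξ = 1/2) :
    FourierTransform.fourier
      (fun x => h (x + 2*δ) - 2 * h (x + δ) + h x) ξ
    = 4 * FourierTransform.fourier h ξ := by
  have hL : Continuous fun p : ℝ × ℝ => (innerₗ ℝ) p.1 p.2 := continuous_inner
  have h1 : Integrable (fun x : ℝ => h (x + δ)) := hInt.comp_add_right δ
  have h2 : Integrable (fun x : ℝ => h (x + 2*δ)) := hInt.comp_add_right (2*δ)
  have key : ∀ a : ℝ, FourierTransform.fourier (fun x => h (x + a)) ξ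
      = (Real.fourierChar (a * ξ) : ℂ) * FourierTransform.fourier h ξ := by
    intro a
    have h3 := congrFun (VectorFourier.fourierIntegral_comp_add_right (𝐞) (volume : Measure ℝ)
      (innerₗ ℝ) h a) ξ
    simpa [FourierTransform.fourier, Circle.smul_def, Function.comp_def, mul_comm a ξ] using h3
  have e1 : FourierTransform.fourier (fun x => h (x + δ)) ξ = - FourierTransform.fourier h ξ := by
    rw [key δ, hδξ, char_half]; ring
  have e2 : FourierTransform.fourier (fun x => h (x + 2*δ)) ξ = FourierTransform.fourier h ξ := by
    rw [key (2*δ), show (2*δ) * ξ = 1 by rw [mul_assoc, hδξ]; norm_num, char_one]; ring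
  have lin : FourierTransform.fourier (fun x => h (x + 2*δ) - 2 * h (x + δ) + h x) ξ
      = FourierTransform.fourier (fun x => h (x + 2*δ)) ξ
        - 2 * FourierTransform.fourier (fun x => h (x + δ)) ξ + FourierTransform.fourier h ξ := by
    have hi : ∀ g : ℝ → ℂ, Integrable g →
        Integrable (fun x : ℝ => (𝐞 (-⟪x, ξ⟫) : ℂ) • g x) := by
      intro g hg
      exact (VectorFourier.fourierIntegral_convergent_iff
        Real.continuous_fourierChar hL ξ).2 hg
    show (∫ x : ℝ, (𝐞 (-⟪x, ξ⟫) : ℂ) • (h (x + 2*δ) - 2 * h (x + δ) + h x)) = _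
    have heq : ∀ x : ℝ, (𝐞 (-⟪x, ξ⟫) : ℂ) • (h (x + 2*δ) - 2 * h (x + δ) + h x)
        = (𝐞 (-⟪x, ξ⟫) : ℂ) • h (x + 2*δ) - 2 * ((𝐞 (-⟪x, ξ⟫) : ℂ) • h (x + δ))
          + (𝐞 (-⟪x, ξ⟫) : ℂ) • h x := by
      intro x; simp [smul_eq_mul]; ring
    rw [integral_congr_ae (Filter.Eventually.of_forall heq)]
    have iA : Integrable (fun x : ℝ => (𝐞 (-⟪x, ξ⟫) : ℂ) • h (x + 2*δ)
        - 2 * ((𝐞 (-⟪x, ξ⟫) : ℂ) • h (x + δ))) := (hi _ h2).sub ((hi _ h1).const_mul 2)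
    rw [integral_add iA (hi _ hInt), integral_sub (hi _ h2) ((hi _ h1).const_mul 2),
      integral_const_mul]
    rfl
  rw [lin, e1, e2]; ring

lemma hbeta_continuous {β : ℝ} (hβ0 : 0 < β) : Continuous (hbeta β) := by
  rw [hbeta_eq β hβ0]
  exact Complex.continuous_ofReal.comp (Hb_continuous (by positivity))

lemma hbeta_hcs (β : ℝ) : HasCompactSupport (hbeta β) := by
  apply HasCompactSupport.intro (isCompact_Icc (a := (-(1:ℝ))) (b := 1))
  intro x hx
  simp only [Set.mem_Icc, not_and_or, not_le] at hx
  have h1 : 1/2 < |x| := by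
    rcases abs_cases x with ⟨h2, h3⟩ | ⟨h2, h3⟩ <;> rcases hx with h | h <;> linarith
  simp only [hbeta]
  rw [if_neg (not_le.mpr h1)]

lemma hbeta_integrable {β : ℝ} (hβ0 : 0 < β) : Integrable (hbeta β) :=
  (hbeta_continuous hβ0).integrable_of_hasCompactSupport (hbeta_hcs β)

lemma hbeta_decay {β : ℝ} (hβ0 : 0 < β) (hβ1 : β < 1) {ξ : ℝ} (hξ : 2 ≤ |ξ|) :
    ‖FourierTransform.fourier (hbeta β) ξ‖ ≤ 4 * |ξ| ^ (-(1 + β/2)) := by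
  set c : ℝ := β/2 with hc
  have hc0 : 0 < c := by positivity
  have hc1 : c < 1 := by rw [hc]; linarith
  have hξ0 : ξ ≠ 0 := by
    intro h; rw [h, abs_zero] at hξ; linarith
  set δ : ℝ := 1/(2*ξ) with hδdef
  have hδξ : δ * ξ = 1/2 := by rw [hδdef]; field_simp
  have hδ0 : δ ≠ 0 := by
    rw [hδdef]; exact one_div_ne_zero (mul_ne_zero two_ne_zero hξ0)
  have hδabs : |δ| = 1/(2*|ξ|) := by
    rw [hδdef, abs_div, abs_one, abs_mul]; norm_num
  have hδle : |δ| ≤ 1/4 := by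
    rw [hδabs]
    rw [div_le_div_iff₀ (by positivity) (by norm_num)]
    linarith
  -- the identity
  have F4 := four_eq (hbeta_integrable hβ0) hδξ
  have hnorm4 : 4 * ‖FourierTransform.fourier (hbeta β) ξ‖
      = ‖FourierTransform.fourier (fun x => hbeta β (x + 2*δ) - 2 * hbeta β (x + δ) + hbeta β x) ξ‖ := by
    rw [F4, norm_mul]
    norm_num
  -- L¹ bound
  have hL1 : ‖FourierTransform.fourier (fun x => hbeta β (x + 2*δ) - 2 * hbeta β (x + δ) + hbeta β x) ξ‖
      ≤ ∫ x : ℝ, ‖hbeta β (x + 2*δ) - 2 * hbeta β (x + δ) + hbeta β x‖ :=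
    VectorFourier.norm_fourierIntegral_le_integral_norm 𝐞 volume (innerₗ ℝ) _ ξ
  have hptw : ∀ x : ℝ, ‖hbeta β (x + 2*δ) - 2 * hbeta β (x + δ) + hbeta β x‖
      = |Hb c (x + 2*δ) - 2 * Hb c (x + δ) + Hb c x| := by
    intro x
    rw [hbeta_eq β hβ0]
    rw [show (((Hb c (x + 2*δ) : ℝ) : ℂ) - 2 * ((Hb c (x + δ) : ℝ) : ℂ) + ((Hb c x : ℝ) : ℂ))
      = (((Hb c (x + 2*δ) - 2 * Hb c (x + δ) + Hb c x : ℝ)) : ℂ) by push_cast; ring]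
    rw [Complex.norm_real, Real.norm_eq_abs]
  have hL1' : (∫ x : ℝ, ‖hbeta β (x + 2*δ) - 2 * hbeta β (x + δ) + hbeta β x‖)
      = ∫ x : ℝ, |Hb c (x + 2*δ) - 2 * Hb c (x + δ) + Hb c x| := by
    congr 1; funext x; exact hptw x
  have hbound := l1bound' hc0 hc1 hδ0 hδle
  -- final arithmetic
  have hxpos : (0:ℝ) < |ξ| := by linarith
  have h21 : (2:ℝ) ≤ 2 ^ (1+c) := by
    nth_rewrite 1 [← Real.rpow_one 2]
    exact Real.rpow_le_rpow_of_exponent_le (by norm_num) (by linarith)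
  have hA : (0:ℝ) < |ξ| ^ (1+c) := Real.rpow_pos_of_pos hxpos _
  have hδpow : |δ| ^ (1 + c) ≤ (1/2) * |ξ| ^ (-(1 + c)) := by
    calc |δ| ^ (1+c) = ((2*|ξ|) ^ (1+c))⁻¹ := by
          rw [hδabs, show (1/(2*|ξ|):ℝ) = (2*|ξ|)⁻¹ by ring, ← Real.inv_rpow (by positivity)]
      _ = (2 ^ (1+c) * |ξ| ^ (1+c))⁻¹ := by rw [Real.mul_rpow (by norm_num) hxpos.le]
      _ ≤ (2 * |ξ| ^ (1+c))⁻¹ := by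
          apply inv_anti₀ (by positivity)
          exact mul_le_mul_of_nonneg_right h21 hA.le
      _ = (1/2) * (|ξ| ^ (1+c))⁻¹ := by rw [mul_inv]; ring
      _ = (1/2) * |ξ| ^ (-(1+c)) := by rw [Real.rpow_neg hxpos.le]
  have chain : 4 * ‖FourierTransform.fourier (hbeta β) ξ‖ ≤ 14 * |δ| ^ (1+c) := by
    rw [hnorm4]
    calc ‖FourierTransform.fourier (fun x => hbeta β (x + 2*δ) - 2 * hbeta β (x + δ) + hbeta β x) ξ‖
        ≤ ∫ x : ℝ, ‖hbeta β (x + 2*δ) - 2 * hbeta β (x + δ) + hbeta β x‖ := hL1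
      _ = ∫ x : ℝ, |Hb c (x + 2*δ) - 2 * Hb c (x + δ) + Hb c x| := hL1'
      _ ≤ 14 * |δ| ^ (1+c) := hbound
  have hneg : (0:ℝ) ≤ |ξ| ^ (-(1+c)) := Real.rpow_nonneg hxpos.le _
  nlinarith [hδpow, chain]

lemma hbeta_fourier_le {β : ℝ} (hβ0 : 0 < β) (hβ1 : β < 1) (ξ : ℝ) :
    ‖FourierTransform.fourier (hbeta β) ξ‖ ≤ 2 := by
  have h1 : ‖FourierTransform.fourier (hbeta β) ξ‖ ≤ ∫ x : ℝ, ‖hbeta β x‖ :=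
    VectorFourier.norm_fourierIntegral_le_integral_norm 𝐞 volume (innerₗ ℝ) _ ξ
  have hc : Continuous fun x : ℝ => ‖hbeta β x‖ := (hbeta_continuous hβ0).norm
  have hsupp : Function.support (fun x : ℝ => ‖hbeta β x‖) ⊆ Set.Ioc (-1 : ℝ) 1 := by
    intro x hx
    by_contra hmem
    apply hx
    simp only [Set.mem_Ioc, not_and_or, not_lt, not_le] at hmem
    have h2 : ¬ |x| ≤ 1/2 := by
      rcases abs_cases x with ⟨e, he⟩ | ⟨e, he⟩ <;> rcases hmem with h | h <;>
        rw [not_le, e] <;> linarith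
    simp only [hbeta]
    rw [if_neg h2, norm_zero]
  have h3 : (∫ x : ℝ, ‖hbeta β x‖) = ∫ x in (-1 : ℝ)..1, ‖hbeta β x‖ :=
    (intervalIntegral.integral_eq_integral_of_support_subset hsupp).symm
  have h4 : (∫ x in (-1 : ℝ)..1, ‖hbeta β x‖) ≤ ∫ _x in (-1 : ℝ)..1, (1:ℝ) := by
    apply intervalIntegral.integral_mono_on (by norm_num)
      (hc.intervalIntegrable _ _) intervalIntegrable_const
    intro x _
    rw [hbeta_eq β hβ0, Complex.norm_real, Real.norm_eq_abs,
      _root_.abs_of_nonneg (Hb_nonneg _ _)]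
    exact Hb_le_one (by positivity) x
  have h5 : (∫ _x in (-1 : ℝ)..1, (1:ℝ)) = 2 := by simp; norm_num
  linarith

/-- **Proposition.**  Fix `0 < β < 1`.  Then `h_β ∈ W^{s,2}(ℝ) = H^s(ℝ)` for every
`0 ≤ s < (1+β)/2`; equivalently `h_β ∈ L²(ℝ)` and `∫ |ξ|^{2s} |ĥ_β(ξ)|² dξ < ∞` for all such
`s`, where `ĥ_β` is the Fourier transform of `h_β`. -/
theorem hbeta_sobolev (β : ℝ) (hβ0 : 0 < β) (hβ1 : β < 1) :
    MemLp (hbeta β) 2 (volume : Measure ℝ) ∧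
    ∀ s : ℝ, 0 ≤ s → s < (1 + β) / 2 →
      (∫⁻ ξ : ℝ, ENNReal.ofReal (|ξ| ^ (2 * s)) *
          (‖FourierTransform.fourier (hbeta β) ξ‖₊ : ℝ≥0∞) ^ 2) ≠ ⊤ := by
  constructor
  · exact (hbeta_continuous hβ0).memLp_of_hasCompactSupport (hbeta_hcs β)
  intro s hs0 hs1
  set Φ : ℝ → ℝ≥0∞ := fun ξ => ENNReal.ofReal (|ξ| ^ (2 * s)) *
      (‖FourierTransform.fourier (hbeta β) ξ‖₊ : ℝ≥0∞) ^ 2 with hΦ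
  have hFc : Continuous (FourierTransform.fourier (hbeta β)) :=
    VectorFourier.fourierIntegral_continuous Real.continuous_fourierChar
      continuous_inner (hbeta_integrable hβ0)
  have hΦm : Measurable Φ := by
    apply Measurable.mul (f := fun ξ => ENNReal.ofReal (|ξ| ^ (2 * s)))
      (g := fun ξ => (‖FourierTransform.fourier (hbeta β) ξ‖₊ : ℝ≥0∞) ^ 2)
    · exact ENNReal.measurable_ofReal.comp
        ((_root_.continuous_abs.rpow_const (fun x => Or.inr (by positivity))).measurable)
    · exact ((hFc.nnnorm.measurable).coe_nnreal_ennreal).pow_const 2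
  have hsplit := lintegral_add_compl (μ := volume) Φ (measurableSet_Icc : MeasurableSet (Set.Icc (-2:ℝ) 2))
  apply ne_top_of_le_ne_top _ (le_of_eq hsplit.symm)
  apply ENNReal.add_ne_top.mpr
  constructor
  · -- low frequencies
    have hb : ∀ ξ ∈ Set.Icc (-2:ℝ) 2, Φ ξ ≤ ENNReal.ofReal 4 * ENNReal.ofReal 4 := by
      intro ξ hξ
      have habs : |ξ| ≤ 2 := abs_le.mpr hξ
      have t1 : ENNReal.ofReal (|ξ| ^ (2*s)) ≤ ENNReal.ofReal 4 := by
        apply ENNReal.ofReal_le_ofReal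
        calc |ξ| ^ (2*s) ≤ 2 ^ (2*s) :=
              Real.rpow_le_rpow (abs_nonneg _) habs (by positivity)
          _ ≤ 2 ^ (2:ℝ) := Real.rpow_le_rpow_of_exponent_le one_le_two (by linarith)
          _ = 4 := by
              rw [show (2:ℝ) = ((2:ℕ):ℝ) by norm_num, Real.rpow_natCast]; norm_num
      have t2 : (‖FourierTransform.fourier (hbeta β) ξ‖₊ : ℝ≥0∞) ^ 2 ≤ ENNReal.ofReal 4 := by
        have : (‖FourierTransform.fourier (hbeta β) ξ‖₊ : ℝ≥0∞) ≤ ENNReal.ofReal 2 := by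
          rw [← enorm_eq_nnnorm, ← ofReal_norm]
          exact ENNReal.ofReal_le_ofReal (hbeta_fourier_le hβ0 hβ1 ξ)
        calc (‖FourierTransform.fourier (hbeta β) ξ‖₊ : ℝ≥0∞) ^ 2 ≤ (ENNReal.ofReal 2) ^ 2 :=
              pow_le_pow_left₀ zero_le this 2
          _ = ENNReal.ofReal 4 := by
              rw [← ENNReal.ofReal_pow (by norm_num)]; norm_num
      exact mul_le_mul' t1 t2
    have : (∫⁻ ξ in Set.Icc (-2:ℝ) 2, Φ ξ) ≤ ENNReal.ofReal 4 * ENNReal.ofReal 4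
        * volume (Set.Icc (-2:ℝ) 2) := by
      calc (∫⁻ ξ in Set.Icc (-2:ℝ) 2, Φ ξ)
          ≤ ∫⁻ _ξ in Set.Icc (-2:ℝ) 2, ENNReal.ofReal 4 * ENNReal.ofReal 4 :=
            setLIntegral_mono' measurableSet_Icc hb
        _ = ENNReal.ofReal 4 * ENNReal.ofReal 4 * volume (Set.Icc (-2:ℝ) 2) :=
            setLIntegral_const _ _
    apply ne_top_of_le_ne_top _ this
    rw [Real.volume_Icc]
    exact ENNReal.mul_ne_top (ENNReal.mul_ne_top ENNReal.ofReal_ne_top ENNReal.ofReal_ne_top)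
      ENNReal.ofReal_ne_top
  · -- high frequencies
    set p : ℝ := 2*s - 2 - β with hp
    have hplt : p < -1 := by rw [hp]; linarith
    have hb : ∀ ξ ∈ (Set.Icc (-2:ℝ) 2)ᶜ, Φ ξ ≤ ENNReal.ofReal (16 * |ξ| ^ p) := by
      intro ξ hξ
      have habs : 2 < |ξ| := by
        simp only [Set.mem_compl_iff, Set.mem_Icc, not_and_or, not_le] at hξ
        rcases abs_cases ξ with ⟨e, he⟩ | ⟨e, he⟩ <;> rcases hξ with h | h <;>
          rw [e] <;> linarith
      have hpos : (0:ℝ) < |ξ| := by linarith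
      have hdecay := hbeta_decay hβ0 hβ1 (le_of_lt habs)
      have t2 : (‖FourierTransform.fourier (hbeta β) ξ‖₊ : ℝ≥0∞) ^ 2
          ≤ ENNReal.ofReal ((4 * |ξ| ^ (-(1 + β/2))) ^ 2) := by
        rw [← enorm_eq_nnnorm, ← ofReal_norm, ← ENNReal.ofReal_pow (norm_nonneg _)]
        exact ENNReal.ofReal_le_ofReal (pow_le_pow_left₀ (norm_nonneg _) hdecay 2)
      have hAA : (|ξ| ^ (-(1 + β/2)))^2 = |ξ| ^ (-(2+β)) := by
        rw [pow_two, ← Real.rpow_add hpos]; congr 1; ring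
      have key : |ξ| ^ (2*s) * (4 * |ξ| ^ (-(1 + β/2))) ^ 2 = 16 * |ξ| ^ p := by
        calc |ξ| ^ (2*s) * (4 * |ξ| ^ (-(1 + β/2))) ^ 2
            = 16 * (|ξ| ^ (2*s) * |ξ| ^ (-(2+β))) := by rw [mul_pow, hAA]; ring
          _ = 16 * |ξ| ^ p := by
              rw [← Real.rpow_add hpos]; congr 1; rw [hp]; ring
      calc Φ ξ ≤ ENNReal.ofReal (|ξ| ^ (2*s)) * ENNReal.ofReal ((4 * |ξ| ^ (-(1 + β/2))) ^ 2) :=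
            mul_le_mul' le_rfl t2
        _ = ENNReal.ofReal (|ξ| ^ (2*s) * (4 * |ξ| ^ (-(1 + β/2))) ^ 2) :=
            (ENNReal.ofReal_mul (Real.rpow_nonneg (abs_nonneg _) _)).symm
        _ = ENNReal.ofReal (16 * |ξ| ^ p) := by rw [key]
    have step1 : (∫⁻ ξ in (Set.Icc (-2:ℝ) 2)ᶜ, Φ ξ)
        ≤ ∫⁻ ξ in (Set.Icc (-2:ℝ) 2)ᶜ, ENNReal.ofReal (16 * |ξ| ^ p) :=
      setLIntegral_mono' measurableSet_Icc.compl hb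
    -- finiteness of the majorant
    have hIoi : (∫⁻ ξ in Set.Ioi (2:ℝ), ENNReal.ofReal (16 * |ξ| ^ p)) < ⊤ := by
      have hInt : IntegrableOn (fun ξ : ℝ => 16 * ξ ^ p) (Set.Ioi 2) :=
        (integrableOn_Ioi_rpow_of_lt hplt two_pos).const_mul 16
      have hcongr : (∫⁻ ξ in Set.Ioi (2:ℝ), ENNReal.ofReal (16 * |ξ| ^ p))
          = ∫⁻ ξ in Set.Ioi (2:ℝ), ENNReal.ofReal (16 * ξ ^ p) := by
        apply setLIntegral_congr_fun measurableSet_Ioi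
        intro ξ hξ
        beta_reduce
        rw [_root_.abs_of_nonneg (by linarith [Set.mem_Ioi.mp hξ] : (0:ℝ) ≤ ξ)]
      rw [hcongr]
      exact hInt.lintegral_lt_top
    have hIio : (∫⁻ ξ in Set.Iio (-2:ℝ), ENNReal.ofReal (16 * |ξ| ^ p))
        = ∫⁻ ξ in Set.Ioi (2:ℝ), ENNReal.ofReal (16 * |ξ| ^ p) := by
      have hmp : MeasurePreserving (fun x : ℝ => -x) volume volume :=
        Measure.measurePreserving_neg volume
      have hemb : MeasurableEmbedding (fun x : ℝ => -x) :=
        (Homeomorph.neg ℝ).measurableEmbedding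
      have := hmp.setLIntegral_comp_preimage_emb hemb
        (fun ξ => ENNReal.ofReal (16 * |ξ| ^ p)) (Set.Iio (-2:ℝ))
      rw [← this]
      have hpre : (fun x : ℝ => -x) ⁻¹' Set.Iio (-2:ℝ) = Set.Ioi (2:ℝ) := by
        ext x; simp only [Set.mem_preimage, Set.mem_Iio, Set.mem_Ioi]; constructor <;> intro <;> linarith
      rw [hpre]
      congr 1
      funext x
      rw [abs_neg]
    have hcompl : (Set.Icc (-2:ℝ) 2)ᶜ = Set.Iio (-2:ℝ) ∪ Set.Ioi 2 := by
      ext x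
      simp only [Set.mem_compl_iff, Set.mem_Icc, not_and_or, not_le, Set.mem_union,
        Set.mem_Iio, Set.mem_Ioi]
    have step2 : (∫⁻ ξ in (Set.Icc (-2:ℝ) 2)ᶜ, ENNReal.ofReal (16 * |ξ| ^ p)) < ⊤ := by
      rw [hcompl]
      calc (∫⁻ ξ in Set.Iio (-2:ℝ) ∪ Set.Ioi 2, ENNReal.ofReal (16 * |ξ| ^ p))
          ≤ (∫⁻ ξ in Set.Iio (-2:ℝ), ENNReal.ofReal (16 * |ξ| ^ p))
            + ∫⁻ ξ in Set.Ioi (2:ℝ), ENNReal.ofReal (16 * |ξ| ^ p) :=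
            lintegral_union_le _ _ _
        _ < ⊤ := by
            rw [hIio]
            exact ENNReal.add_lt_top.mpr ⟨hIoi, hIoi⟩
    exact ne_top_of_le_ne_top step2.ne step1
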